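/- Let α₁, β₂, a₁, c, d be real constants. Define u(x,t) = c·e^{−a₁²t}cos(a₁x) and v(x,t) = d·e^{β₂t}(1 + sin(a₁x)). Then u and v satisfy the system ∂u/∂t = ∂/∂x(∂u/∂x + α₁ v ∂v/∂x) − a₁²α₁v² − 3α₁ v ∂²v/∂x² and ∂v/∂t = ∂²u/∂x² + a₁²u + β₂v for all (x,t) ∈ ℝ². -/

import Mathlib

/-- `u(x, t) = c e^{−a₁² t} cos(a₁ x)`. -/
noncomputable def uTrigExact (a₁ c : ℝ) (x t : ℝ) : ℝ :=
  c * Real.exp (-a₁ ^ 2 * t) * Real.cos (a₁ * x)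

/-- `v(x, t) = d e^{β₂ t} (1 + sin(a₁ x))`. -/
noncomputable def vTrigExact (a₁ β₂ d : ℝ) (x t : ℝ) : ℝ :=
  d * Real.exp (β₂ * t) * (1 + Real.sin (a₁ * x))

private lemma hcos (a₁ z : ℝ) : HasDerivAt (fun z => Real.cos (a₁ * z)) (-Real.sin (a₁ * z) * a₁) z := by
  simpa using ((hasDerivAt_id z).const_mul a₁).cos

private lemma hsin (a₁ z : ℝ) : HasDerivAt (fun z => Real.sin (a₁ * z)) (Real.cos (a₁ * z) * a₁) z := by
  simpa using ((hasDerivAt_id z).const_mul a₁).sin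

private lemma ux (a₁ c t : ℝ) :
    deriv (fun z => uTrigExact a₁ c z t)
      = fun z => c * Real.exp (-a₁ ^ 2 * t) * (-Real.sin (a₁ * z) * a₁) := by
  funext z
  exact ((hcos a₁ z).const_mul _).deriv

private lemma uxx (a₁ c t z : ℝ) :
    deriv (fun z => c * Real.exp (-a₁ ^ 2 * t) * (-Real.sin (a₁ * z) * a₁)) z
      = c * Real.exp (-a₁ ^ 2 * t) * (-(Real.cos (a₁ * z) * a₁) * a₁) := by
  have h : HasDerivAt (fun z => c * Real.exp (-a₁ ^ 2 * t) * (-Real.sin (a₁ * z) * a₁))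
      (c * Real.exp (-a₁ ^ 2 * t) * (-(Real.cos (a₁ * z) * a₁) * a₁)) z := by
    have := (((hsin a₁ z).neg).mul_const a₁).const_mul (c * Real.exp (-a₁ ^ 2 * t))
    convert this using 1 <;> first | rfl | (funext y; ring) | ring
  exact h.deriv

private lemma vx (a₁ β₂ d t : ℝ) :
    deriv (fun z => vTrigExact a₁ β₂ d z t)
      = fun z => d * Real.exp (β₂ * t) * (Real.cos (a₁ * z) * a₁) := by
  funext z
  have h : HasDerivAt (fun z => vTrigExact a₁ β₂ d z t)
      (d * Real.exp (β₂ * t) * (Real.cos (a₁ * z) * a₁)) z := by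
    have := (((hasDerivAt_const z (1:ℝ)).add (hsin a₁ z))).const_mul (d * Real.exp (β₂ * t))
    convert this using 1 <;> first | rfl | (funext y; simp [vTrigExact]; ring) | ring
  exact h.deriv

private lemma vxx (a₁ β₂ d t z : ℝ) :
    deriv (fun z => d * Real.exp (β₂ * t) * (Real.cos (a₁ * z) * a₁)) z
      = d * Real.exp (β₂ * t) * (-Real.sin (a₁ * z) * a₁ * a₁) := by
  have h : HasDerivAt (fun z => d * Real.exp (β₂ * t) * (Real.cos (a₁ * z) * a₁))
      (d * Real.exp (β₂ * t) * (-Real.sin (a₁ * z) * a₁ * a₁)) z := by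
    have := ((hcos a₁ z).mul_const a₁).const_mul (d * Real.exp (β₂ * t))
    convert this using 1 <;> first | rfl | (funext y; ring) | ring
  exact h.deriv

private lemma ut (a₁ c x t : ℝ) :
    deriv (fun s => uTrigExact a₁ c x s) t
      = -a₁ ^ 2 * uTrigExact a₁ c x t := by
  simp only [uTrigExact]
  have he : HasDerivAt (fun s => Real.exp (-a₁ ^ 2 * s))
      (Real.exp (-a₁ ^ 2 * t) * (-a₁ ^ 2 * 1)) t := by
    simpa using ((hasDerivAt_id t).const_mul (-a₁ ^ 2)).exp
  rw [((he.const_mul c).mul_const (Real.cos (a₁ * x))).deriv]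
  ring

private lemma vt (a₁ β₂ d x t : ℝ) :
    deriv (fun s => vTrigExact a₁ β₂ d x s) t
      = β₂ * vTrigExact a₁ β₂ d x t := by
  simp only [vTrigExact]
  have he : HasDerivAt (fun s => Real.exp (β₂ * s))
      (Real.exp (β₂ * t) * (β₂ * 1)) t := by
    simpa using ((hasDerivAt_id t).const_mul β₂).exp
  rw [((he.const_mul d).mul_const (1 + Real.sin (a₁ * x))).deriv]
  ring

theorem trig_exact_solution
    (α₁ β₂ a₁ c d : ℝ) :
    (∀ x t : ℝ,
      deriv (fun s => uTrigExact a₁ c x s) t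
        = deriv (fun y => deriv (fun z => uTrigExact a₁ c z t) y
            + α₁ * vTrigExact a₁ β₂ d y t * deriv (fun z => vTrigExact a₁ β₂ d z t) y) x
          - a₁ ^ 2 * α₁ * (vTrigExact a₁ β₂ d x t) ^ 2
          - 3 * α₁ * vTrigExact a₁ β₂ d x t
            * iteratedDeriv 2 (fun z => vTrigExact a₁ β₂ d z t) x) ∧
    (∀ x t : ℝ,
      deriv (fun s => vTrigExact a₁ β₂ d x s) t
        = iteratedDeriv 2 (fun z => uTrigExact a₁ c z t) x
          + a₁ ^ 2 * uTrigExact a₁ c x t + β₂ * vTrigExact a₁ β₂ d x t) := by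
  constructor
  · intro x t
    set E := Real.exp (β₂ * t) with hE
    have hvxx2 : iteratedDeriv 2 (fun z => vTrigExact a₁ β₂ d z t) x
        = d * E * (-Real.sin (a₁ * x) * a₁ * a₁) := by
      rw [iteratedDeriv_succ, iteratedDeriv_one, vx, vxx]
    have hbig : deriv (fun y => deriv (fun z => uTrigExact a₁ c z t) y
            + α₁ * vTrigExact a₁ β₂ d y t * deriv (fun z => vTrigExact a₁ β₂ d z t) y) x
        = c * Real.exp (-a₁ ^ 2 * t) * (-(Real.cos (a₁ * x) * a₁) * a₁)
          + α₁ * ((d * E * (Real.cos (a₁ * x) * a₁)) * (d * E * (Real.cos (a₁ * x) * a₁))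
            + (d * E * (1 + Real.sin (a₁ * x))) * (d * E * (-Real.sin (a₁ * x) * a₁ * a₁))) := by
      have heq : (fun y => deriv (fun z => uTrigExact a₁ c z t) y
            + α₁ * vTrigExact a₁ β₂ d y t * deriv (fun z => vTrigExact a₁ β₂ d z t) y)
          = (fun y => c * Real.exp (-a₁ ^ 2 * t) * (-Real.sin (a₁ * y) * a₁)
            + α₁ * (d * E * (1 + Real.sin (a₁ * y))) * (d * E * (Real.cos (a₁ * y) * a₁))) := by
        funext y; rw [ux, vx]; simp [vTrigExact, hE]
      rw [heq]
      have h1 : HasDerivAt (fun y => c * Real.exp (-a₁ ^ 2 * t) * (-Real.sin (a₁ * y) * a₁))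
          (c * Real.exp (-a₁ ^ 2 * t) * (-(Real.cos (a₁ * x) * a₁) * a₁)) x := by
        have := (((hsin a₁ x).neg).mul_const a₁).const_mul (c * Real.exp (-a₁ ^ 2 * t))
        convert this using 1 <;> first | rfl | (funext y; ring) | ring
      have hA : HasDerivAt (fun y => d * E * (1 + Real.sin (a₁ * y)))
          (d * E * (Real.cos (a₁ * x) * a₁)) x := by
        have := (((hasDerivAt_const x (1:ℝ)).add (hsin a₁ x))).const_mul (d * E)
        convert this using 1 <;> first | rfl | (funext y; ring) | ring
      have hB : HasDerivAt (fun y => d * E * (Real.cos (a₁ * y) * a₁))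
          (d * E * (-Real.sin (a₁ * x) * a₁ * a₁)) x := by
        have := ((hcos a₁ x).mul_const a₁).const_mul (d * E)
        convert this using 1 <;> first | rfl | (funext y; ring) | ring
      have h2 : HasDerivAt (fun y => α₁ * (d * E * (1 + Real.sin (a₁ * y))) * (d * E * (Real.cos (a₁ * y) * a₁)))
          (α₁ * ((d * E * (Real.cos (a₁ * x) * a₁)) * (d * E * (Real.cos (a₁ * x) * a₁))
            + (d * E * (1 + Real.sin (a₁ * x))) * (d * E * (-Real.sin (a₁ * x) * a₁ * a₁)))) x := by
        have := (hA.const_mul α₁).mul hB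
        convert this using 1 <;> first | rfl | (funext y; ring) | ring
      exact (h1.add h2).deriv
    rw [ut, hbig, hvxx2]
    have hpy : Real.sin (a₁ * x) ^ 2 + Real.cos (a₁ * x) ^ 2 = 1 := Real.sin_sq_add_cos_sq _
    simp only [uTrigExact, vTrigExact, ← hE]
    linear_combination (-α₁ * (d * E) ^ 2 * a₁ ^ 2) * hpy
  · intro x t
    have huxx2 : iteratedDeriv 2 (fun z => uTrigExact a₁ c z t) x
        = c * Real.exp (-a₁ ^ 2 * t) * (-(Real.cos (a₁ * x) * a₁) * a₁) := by
      rw [iteratedDeriv_succ, iteratedDeriv_one, ux, uxx]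
    rw [vt, huxx2]
    simp only [uTrigExact, vTrigExact]
    ring
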